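/- Let q > 2 be odd. Then liminf_{x→∞} (1/x)·#{n ≤ x : f_{2,q}(n) is even} ≥ 1/(2q) − 1/(2q²). -/

import Mathlib

open Filter Real

/-- Number of representations of `n` as a sum of distinct terms of the form `p^a * q^b`. -/
noncomputable def fpq (p q n : ℕ) : ℕ :=
  Set.ncard {S : Finset ℕ | (∀ k ∈ S, ∃ a b : ℕ, k = p ^ a * q ^ b) ∧ S.sum id = n}

namespace Stmt11Aux

open Finset

/-! ### Powers of two and binary representations -/

def IsP2 (k : ℕ) : Prop := ∃ a : ℕ, k = 2 ^ a

lemma isP2_iff (k : ℕ) : IsP2 k ↔ k = 2 ^ Nat.log 2 k := by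
  constructor
  · rintro ⟨a, rfl⟩
    rw [Nat.log_pow (by norm_num)]
  · intro h; exact ⟨_, h⟩

instance : DecidablePred IsP2 := fun k => decidable_of_iff _ (isP2_iff k).symm

/-- The set of powers of two whose sum is `t`. -/
def bin (t : ℕ) : Finset ℕ := t.bitIndices.toFinset.image (2 ^ ·)

lemma bin_p2 {t k : ℕ} (h : k ∈ bin t) : IsP2 k := by
  simp only [bin, mem_image] at h
  obtain ⟨a, -, rfl⟩ := h
  exact ⟨a, rfl⟩

lemma bin_sum (t : ℕ) : (bin t).sum id = t := by
  rw [bin, Finset.sum_image]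
  · exact Finset.twoPowSum_toFinset_bitIndices t
  · intro x _ y _ h
    exact Nat.pow_right_injective le_rfl h

lemma bin_eq {A : Finset ℕ} (h : ∀ k ∈ A, IsP2 k) : bin (A.sum id) = A := by
  classical
  set E : Finset ℕ := A.image (Nat.log 2) with hE
  have hEA : E.image (2 ^ ·) = A := by
    rw [hE, Finset.image_image]
    have : ∀ k ∈ A, ((2 ^ ·) ∘ Nat.log 2) k = id k := by
      intro k hk
      simpa using ((isP2_iff k).mp (h k hk)).symm
    rw [Finset.image_congr this, Finset.image_id]
  have hinj : ∀ x ∈ E, ∀ y ∈ E, 2 ^ x = 2 ^ y → x = y :=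
    fun x _ y _ h => Nat.pow_right_injective le_rfl h
  have hsum : A.sum id = ∑ i ∈ E, 2 ^ i := by
    rw [← hEA, Finset.sum_image hinj]
    simp
  rw [hsum, bin]
  rw [Finset.toFinset_bitIndices_twoPowSum E, hEA]

/-! ### The representation sets -/

def Good (q k : ℕ) : Prop := ∃ a b : ℕ, k = 2 ^ a * q ^ b

def R (q n : ℕ) : Set (Finset ℕ) :=
  {S | (∀ k ∈ S, Good q k) ∧ S.sum id = n}

lemma fpq_eq (q n : ℕ) : fpq 2 q n = (R q n).ncard := rfl

variable {q : ℕ}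

lemma good_pos (hq : 2 < q) {k : ℕ} (h : Good q k) : 0 < k := by
  obtain ⟨a, b, rfl⟩ := h
  have : 0 < q := by omega
  positivity

lemma q_dvd_of_good_not_p2 {k : ℕ} (h : Good q k) (h2 : ¬ IsP2 k) : q ∣ k := by
  obtain ⟨a, b, rfl⟩ := h
  cases b with
  | zero => exact absurd ⟨a, by simp⟩ h2
  | succ b => exact ⟨2 ^ a * q ^ b, by ring⟩

lemma not_p2_of_q_dvd (hq : 2 < q) (hodd : Odd q) {k : ℕ} (hd : q ∣ k) (hk : 0 < k) :
    ¬ IsP2 k := by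
  rintro ⟨a, rfl⟩
  have hc : Nat.Coprime q 2 := Nat.coprime_two_right.mpr hodd
  have h1 : q ∣ 1 := by
    have := (hc.pow_right a).eq_one_of_dvd hd
    omega
  have := Nat.le_of_dvd one_pos h1
  omega

lemma mem_le_of_mem_R {n : ℕ} {S : Finset ℕ} (hS : S ∈ R q n) {k : ℕ} (hk : k ∈ S) :
    k ≤ n := by
  have h1 : id k ≤ S.sum id := Finset.single_le_sum (f := id) (fun i _ => Nat.zero_le i) hk
  rw [hS.2] at h1
  exact h1

lemma R_finite (q n : ℕ) : (R q n).Finite := by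
  apply Set.Finite.subset (Finset.range (n + 1)).powerset.finite_toSet
  intro S hS
  simp only [Finset.coe_powerset, Set.mem_preimage, Set.mem_powerset_iff]
  intro k hk
  simp only [Finset.coe_range, Set.mem_Iio]
  have := mem_le_of_mem_R hS hk
  omega

lemma R_zero (hq : 2 < q) : R q 0 = {∅} := by
  ext S
  simp only [R, Set.mem_setOf_eq, Set.mem_singleton_iff]
  constructor
  · rintro ⟨hg, hs⟩
    by_contra hne
    obtain ⟨k, hk⟩ := Finset.nonempty_iff_ne_empty.mpr hne
    have h1 := good_pos hq (hg k hk)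
    have h2 : k ≤ 0 := mem_le_of_mem_R ⟨hg, hs⟩ hk
    omega
  · rintro rfl
    exact ⟨by simp, by simp⟩

lemma fpq_zero (hq : 2 < q) : fpq 2 q 0 = 1 := by
  rw [fpq_eq, R_zero hq, Set.ncard_singleton]

/-! ### Splitting off the power-of-two part -/

noncomputable def NP (S : Finset ℕ) : Finset ℕ := S.filter (fun k => ¬ IsP2 k)

noncomputable def t0 (S : Finset ℕ) : ℕ := (S.filter (fun k => IsP2 k)).sum id

lemma sum_split (S : Finset ℕ) : t0 S + (NP S).sum id = S.sum id := by
  rw [t0, NP]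
  exact Finset.sum_filter_add_sum_filter_not S _ id

lemma NP_union {S B : Finset ℕ} (hB : ∀ k ∈ B, IsP2 k) : NP (NP S ∪ B) = NP S := by
  ext k
  have := hB k
  simp only [NP, Finset.mem_filter, Finset.mem_union]
  tauto

lemma P2_union {S B : Finset ℕ} (hB : ∀ k ∈ B, IsP2 k) :
    (NP S ∪ B).filter (fun k => IsP2 k) = B := by
  ext k
  have := hB k
  simp only [Finset.mem_filter, Finset.mem_union, NP]
  tauto

lemma t0_union {S B : Finset ℕ} (hB : ∀ k ∈ B, IsP2 k) : t0 (NP S ∪ B) = B.sum id := by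
  rw [t0, P2_union hB]

lemma disjoint_NP {S B : Finset ℕ} (hB : ∀ k ∈ B, IsP2 k) : Disjoint (NP S) B := by
  rw [Finset.disjoint_left]
  intro k hk hkB
  simp only [NP, Finset.mem_filter] at hk
  exact hk.2 (hB k hkB)

lemma sum_NP_union {S B : Finset ℕ} (hB : ∀ k ∈ B, IsP2 k) :
    (NP S ∪ B).sum id = (NP S).sum id + B.sum id := by
  rw [Finset.sum_union (disjoint_NP hB)]

lemma NP_recover (S : Finset ℕ) : NP S ∪ S.filter (fun k => IsP2 k) = S := by
  rw [NP, Finset.union_comm, Finset.filter_union_filter_not_eq (fun k => IsP2 k) S]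

/-- decrement map -/
noncomputable def dec (S : Finset ℕ) : Finset ℕ := NP S ∪ bin (t0 S - 1)

lemma dec_NP (S : Finset ℕ) : NP (dec S) = NP S := by
  rw [dec]; exact NP_union (fun k hk => bin_p2 hk)

lemma dec_t0 (S : Finset ℕ) : t0 (dec S) = t0 S - 1 := by
  rw [dec, t0_union (fun k hk => bin_p2 hk), bin_sum]

lemma self_recover (S : Finset ℕ) : NP S ∪ bin (t0 S) = S := by
  rw [t0, bin_eq (fun k hk => (Finset.mem_filter.mp hk).2)]
  exact NP_recover S

lemma ncard_dec (hq : 2 < q) {n : ℕ} (hn : n ≠ 0) :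
    {S ∈ R q n | t0 S ≠ 0}.ncard = (R q (n - 1)).ncard := by
  have hbp2 : ∀ t : ℕ, ∀ k ∈ bin t, IsP2 k := fun t k hk => bin_p2 hk
  have himg : dec '' {S ∈ R q n | t0 S ≠ 0} = R q (n - 1) := by
    ext T
    constructor
    · rintro ⟨S, ⟨⟨hg, hs⟩, ht0⟩, rfl⟩
      constructor
      · intro k hk
        rw [dec, Finset.mem_union] at hk
        rcases hk with hk | hk
        · exact hg k (Finset.mem_of_mem_filter k hk)
        · obtain ⟨a, rfl⟩ := bin_p2 hk
          exact ⟨a, 0, by simp⟩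
      · rw [dec, sum_NP_union (hbp2 _), bin_sum]
        have hsplit := sum_split S
        rw [hs] at hsplit
        omega
    · intro hT
      refine ⟨NP T ∪ bin (t0 T + 1), ⟨⟨?_, ?_⟩, ?_⟩, ?_⟩
      · intro k hk
        rw [Finset.mem_union] at hk
        rcases hk with hk | hk
        · exact hT.1 k (Finset.mem_of_mem_filter k hk)
        · obtain ⟨a, rfl⟩ := bin_p2 hk
          exact ⟨a, 0, by simp⟩
      · rw [sum_NP_union (hbp2 _), bin_sum]
        have hsplit := sum_split T
        rw [hT.2] at hsplit
        omega
      · rw [t0_union (hbp2 _), bin_sum]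
        omega
      · rw [dec, NP_union (hbp2 _), t0_union (hbp2 _), bin_sum]
        simpa using self_recover T
  have hinj : Set.InjOn dec {S ∈ R q n | t0 S ≠ 0} := by
    rintro S ⟨hSR, hS0⟩ S' ⟨hS'R, hS'0⟩ heq
    have hNP : NP S = NP S' := by
      rw [← dec_NP S, ← dec_NP S', heq]
    have ht : t0 S = t0 S' := by
      have h1 : t0 S - 1 = t0 S' - 1 := by rw [← dec_t0 S, ← dec_t0 S', heq]
      omega
    rw [← self_recover S, ← self_recover S', hNP, ht]
  rw [← himg, Set.ncard_image_of_injOn hinj]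

lemma ncard_split (q : ℕ) (n : ℕ) :
    (R q n).ncard = {S ∈ R q n | t0 S ≠ 0}.ncard + {S ∈ R q n | t0 S = 0}.ncard := by
  have hu : {S ∈ R q n | t0 S ≠ 0} ∪ {S ∈ R q n | t0 S = 0} = R q n := by
    ext S
    simp only [Set.mem_union, Set.mem_sep_iff]
    tauto
  have hdis : Disjoint {S ∈ R q n | t0 S ≠ 0} {S ∈ R q n | t0 S = 0} := by
    rw [Set.disjoint_left]
    rintro S ⟨-, h⟩ ⟨-, h'⟩
    exact h h'
  conv_lhs => rw [← hu]
  exact Set.ncard_union_eq hdis ((R_finite q n).subset (Set.sep_subset _ _))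
    ((R_finite q n).subset (Set.sep_subset _ _))

lemma q_dvd_sum_NP {n : ℕ} {S : Finset ℕ} (hS : S ∈ R q n) : q ∣ (NP S).sum id := by
  apply Finset.dvd_sum
  intro k hk
  rw [NP, Finset.mem_filter] at hk
  exact q_dvd_of_good_not_p2 (hS.1 k hk.1) hk.2

lemma t0_eq_zero_empty (hq : 2 < q) {n : ℕ} (hnd : ¬ q ∣ n) :
    {S ∈ R q n | t0 S = 0} = ∅ := by
  rw [Set.eq_empty_iff_forall_notMem]
  rintro S ⟨hSR, h0⟩
  apply hnd
  have hsplit := sum_split S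
  rw [hSR.2, h0] at hsplit
  have := q_dvd_sum_NP hSR
  rw [← hsplit]
  simpa using this

lemma no_p2_of_t0_zero (hq : 2 < q) {n : ℕ} {S : Finset ℕ} (hS : S ∈ R q n)
    (h0 : t0 S = 0) : ∀ k ∈ S, ¬ IsP2 k := by
  intro k hk hp2
  have hmem : k ∈ S.filter (fun k => IsP2 k) := Finset.mem_filter.mpr ⟨hk, hp2⟩
  have h1 : id k ≤ t0 S := Finset.single_le_sum (f := id) (fun i _ => Nat.zero_le i) hmem
  have h2 := good_pos hq (hS.1 k hk)
  simp only [id] at h1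
  omega

lemma ncard_div (hq : 2 < q) (hodd : Odd q) {n : ℕ} (hdv : q ∣ n) :
    {S ∈ R q n | t0 S = 0}.ncard = (R q (n / q)).ncard := by
  have hq0 : 0 < q := by omega
  set φ : Finset ℕ → Finset ℕ := fun S => S.image (fun k => k / q) with hφ
  have hdvd_all : ∀ S, S ∈ {S ∈ R q n | t0 S = 0} → ∀ k ∈ S, q ∣ k := by
    rintro S ⟨hSR, h0⟩ k hk
    exact q_dvd_of_good_not_p2 (hSR.1 k hk) (no_p2_of_t0_zero hq hSR h0 k hk)
  have hrec : ∀ S : Finset ℕ, (∀ k ∈ S, q ∣ k) → (φ S).image (fun j => j * q) = S := by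
    intro S hd
    rw [hφ, Finset.image_image]
    have : ∀ k ∈ S, ((fun j => j * q) ∘ (fun k => k / q)) k = id k := by
      intro k hk
      simp only [Function.comp, id]
      exact Nat.div_mul_cancel (hd k hk)
    rw [Finset.image_congr this, Finset.image_id]
  have himg : φ '' {S ∈ R q n | t0 S = 0} = R q (n / q) := by
    ext T
    constructor
    · rintro ⟨S, hSmem, rfl⟩
      obtain ⟨⟨hg, hs⟩, h0⟩ := hSmem
      have hd : ∀ k ∈ S, q ∣ k := hdvd_all S ⟨⟨hg, hs⟩, h0⟩
      have hinjS : ∀ x ∈ S, ∀ y ∈ S, x / q = y / q → x = y := by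
        intro x hx y hy hxy
        have h1 := Nat.div_mul_cancel (hd x hx)
        have h2 := Nat.div_mul_cancel (hd y hy)
        rw [← h1, ← h2, hxy]
      constructor
      · intro j hj
        simp only [hφ, Finset.mem_image] at hj
        obtain ⟨k, hk, rfl⟩ := hj
        obtain ⟨a, b, rfl⟩ := hg k hk
        cases b with
        | zero => exact absurd ⟨a, by simpa using rfl⟩ (no_p2_of_t0_zero hq ⟨hg, hs⟩ h0 _ hk)
        | succ b =>
          refine ⟨a, b, ?_⟩
          rw [pow_succ, ← mul_assoc]
          exact Nat.mul_div_cancel _ hq0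
      · have hsum : (φ S).sum id = ∑ k ∈ S, k / q := by
          rw [hφ, Finset.sum_image hinjS]
          simp
        have hqsum : q * ∑ k ∈ S, k / q = n := by
          rw [Finset.mul_sum]
          have : ∀ k ∈ S, q * (k / q) = k := fun k hk => Nat.mul_div_cancel' (hd k hk)
          rw [Finset.sum_congr rfl this]
          simpa [id] using hs
        rw [hsum, ← hqsum, Nat.mul_div_cancel_left _ hq0]
    · intro hT
      refine ⟨T.image (fun j => j * q), ⟨⟨?_, ?_⟩, ?_⟩, ?_⟩
      · intro k hk
        simp only [Finset.mem_image] at hk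
        obtain ⟨j, hj, rfl⟩ := hk
        obtain ⟨a, b, rfl⟩ := hT.1 j hj
        exact ⟨a, b + 1, by ring⟩
      · have hinjT : ∀ x ∈ T, ∀ y ∈ T, x * q = y * q → x = y := by
          intro x _ y _ h
          exact Nat.eq_of_mul_eq_mul_right hq0 h
        rw [Finset.sum_image hinjT]
        simp only [id]
        rw [← Finset.sum_mul]
        have : T.sum id = n / q := hT.2
        simp only [id] at this
        rw [this, Nat.div_mul_cancel hdv]
      · rw [t0]
        have : (T.image (fun j => j * q)).filter (fun k => IsP2 k) = ∅ := by
          rw [Finset.filter_eq_empty_iff]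
          intro k hk
          simp only [Finset.mem_image] at hk
          obtain ⟨j, hj, rfl⟩ := hk
          have hjpos := good_pos hq (hT.1 j hj)
          exact not_p2_of_q_dvd hq hodd ⟨j, mul_comm j q⟩ (by positivity)
        rw [this, Finset.sum_empty]
      · show (T.image (fun j => j * q)).image (fun k => k / q) = T
        rw [Finset.image_image]
        have : ∀ j ∈ T, ((fun k => k / q) ∘ (fun j => j * q)) j = id j := by
          intro j hj
          simp only [Function.comp, id]
          exact Nat.mul_div_cancel j hq0
        rw [Finset.image_congr this, Finset.image_id]
  have hinj : Set.InjOn φ {S ∈ R q n | t0 S = 0} := by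
    intro S hS S' hS' heq
    rw [← hrec S (hdvd_all S hS), ← hrec S' (hdvd_all S' hS'), heq]
  rw [← himg, Set.ncard_image_of_injOn hinj]

theorem fpq_not_dvd (hq : 2 < q) {n : ℕ} (hn : n ≠ 0) (h : ¬ q ∣ n) :
    fpq 2 q n = fpq 2 q (n - 1) := by
  rw [fpq_eq, fpq_eq, ncard_split q n, t0_eq_zero_empty hq h, ncard_dec hq hn]
  simp

theorem fpq_dvd (hq : 2 < q) (hodd : Odd q) {n : ℕ} (hn : n ≠ 0) (h : q ∣ n) :
    fpq 2 q n = fpq 2 q (n - 1) + fpq 2 q (n / q) := by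
  rw [fpq_eq, fpq_eq, fpq_eq, ncard_split q n, ncard_dec hq hn, ncard_div hq hodd h]


/-! ### The partition-count recursion via `c` -/

noncomputable def c (q m : ℕ) : ℕ := fpq 2 q (q * m)

lemma fpq_block (hq : 2 < q) {m r : ℕ} (hr : r < q) : fpq 2 q (q * m + r) = c q m := by
  induction r with
  | zero => rw [c, add_zero]
  | succ r ih =>
    have h1 : ¬ q ∣ (q * m + (r + 1)) := by
      intro hdvd
      have h2 : q ∣ (r + 1) := (Nat.dvd_add_right ⟨m, rfl⟩).mp hdvd
      have := Nat.le_of_dvd (by omega) h2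
      omega
    have h2 := fpq_not_dvd hq (n := q * m + (r + 1)) (by positivity) h1
    rw [show q * m + (r + 1) - 1 = q * m + r from by omega] at h2
    rw [h2]
    exact ih (by omega)

lemma c_step (hq : 2 < q) (hodd : Odd q) {j : ℕ} (hj : j ≠ 0) :
    c q j = c q (j - 1) + c q (j / q) := by
  have hq0 : 0 < q := by omega
  have hqj : q * j ≠ 0 := Nat.mul_ne_zero (by omega) hj
  have h := fpq_dvd hq hodd hqj ⟨j, rfl⟩
  rw [c, h]
  congr 1
  · obtain ⟨j', rfl⟩ : ∃ j', j = j' + 1 := ⟨j - 1, by omega⟩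
    have he : q * (j' + 1) - 1 = q * j' + (q - 1) := by
      have : q * (j' + 1) = q * j' + q := by ring
      rw [this]
      omega
    rw [he, fpq_block hq (by omega)]
    simp [c]
  · rw [Nat.mul_div_cancel_left _ hq0]
    conv_lhs => rw [← Nat.div_add_mod j q]
    exact fpq_block hq (Nat.mod_lt _ hq0)

lemma even_iff_cast {k : ℕ} : Even k ↔ (k : ZMod 2) = 0 := by
  rw [ZMod.natCast_eq_zero_iff]
  exact ⟨fun h => h.two_dvd, fun h => (even_iff_two_dvd).mpr h⟩

lemma c_block_cast (hq : 2 < q) (hodd : Odd q) (m : ℕ) {r : ℕ} (hr : r < q) :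
    (c q (q * m + r) : ZMod 2) = (c q (q * m) : ZMod 2) + (r : ZMod 2) * (c q m : ZMod 2) := by
  induction r with
  | zero => simp
  | succ r ih =>
    have h0 : q * m + (r + 1) ≠ 0 := by positivity
    have hstep := c_step hq hodd h0
    have hdiv : (q * m + (r + 1)) / q = m := by
      rw [Nat.mul_add_div (by omega), Nat.div_eq_of_lt (by omega)]
      omega
    rw [show q * m + (r + 1) - 1 = q * m + r from by omega, hdiv] at hstep
    rw [hstep]
    push_cast
    rw [ih (by omega)]
    ring

lemma block_evens (hq : 2 < q) (hodd : Odd q) {m : ℕ} (hm : ¬ Even (c q m)) :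
    (q - 1) / 2 ≤ ((Finset.Ico (q * m) (q * m + q)).filter (fun j => Even (c q j))).card := by
  classical
  obtain ⟨w, hw⟩ := hodd
  have hcm : (c q m : ZMod 2) = 1 := by
    have h1 : c q m % 2 = 1 := Nat.not_even_iff.mp hm
    have h2 : ((c q m : ℕ) : ZMod 2) = ((c q m % 2 : ℕ) : ZMod 2) := (ZMod.natCast_mod _ 2).symm
    rw [h2, h1]
    simp
  set s : ℕ := if Even (c q (q * m)) then 0 else 1 with hs
  rw [← Finset.card_range ((q - 1) / 2)]
  apply Finset.card_le_card_of_injOn (fun i => q * m + 2 * i + s)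
  · intro i hi
    rw [Finset.mem_coe, Finset.mem_range] at hi
    have hi2 : 2 * i + s < q := by
      have hs1 : s ≤ 1 := by rw [hs]; split <;> omega
      omega
    rw [Finset.mem_coe, Finset.mem_filter, Finset.mem_Ico]
    beta_reduce
    refine ⟨⟨by omega, by omega⟩, ?_⟩
    rw [even_iff_cast]
    have hcast := c_block_cast hq ⟨w, hw⟩ m (r := 2 * i + s) hi2
    rw [show q * m + 2 * i + s = q * m + (2 * i + s) from by ring, hcast]
    push_cast
    have h2 : (2 : ZMod 2) = 0 := by decide
    rw [hcm]
    by_cases he : Even (c q (q * m))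
    · have hs0 : s = 0 := by rw [hs, if_pos he]
      have hce := even_iff_cast.mp he
      rw [hs0, hce]
      push_cast
      linear_combination (i : ZMod 2) * h2
    · have hs1 : s = 1 := by rw [hs, if_neg he]
      have hc1 : (c q (q * m) : ZMod 2) = 1 := by
        have h1 : c q (q * m) % 2 = 1 := Nat.not_even_iff.mp he
        have h2' : ((c q (q * m) : ℕ) : ZMod 2) = ((c q (q * m) % 2 : ℕ) : ZMod 2) :=
          (ZMod.natCast_mod _ 2).symm
        rw [h2', h1]; simp
      rw [hs1, hc1]
      push_cast
      linear_combination ((1 : ZMod 2) + (i : ZMod 2)) * h2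
  · intro i hi j hj hij
    simp only at hij
    omega

/-! ### Counting even values of `c` -/

noncomputable def Nev (q y : ℕ) : ℕ := ((Finset.range y).filter (fun m => Even (c q m))).card

lemma Nev_mono {a b : ℕ} (h : a ≤ b) : Nev q a ≤ Nev q b :=
  Finset.card_le_card (Finset.filter_subset_filter _ (Finset.range_subset_range.mpr h))

lemma block_sum (hq : 2 < q) (P : ℕ → Prop) [DecidablePred P] (y : ℕ) :
    ((Finset.range (q * y)).filter P).card
      = ∑ m ∈ Finset.range y, ((Finset.Ico (q * m) (q * m + q)).filter P).card := by
  induction y with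
  | zero => simp
  | succ y ih =>
    rw [Finset.sum_range_succ, ← ih]
    have h1 : q * (y + 1) = q * y + q := by ring
    rw [h1, Finset.range_eq_Ico,
      ← Finset.Ico_union_Ico_eq_Ico (Nat.zero_le (q * y)) (Nat.le_add_right (q * y) q),
      Finset.filter_union,
      Finset.card_union_of_disjoint
        (Finset.disjoint_filter_filter (Finset.Ico_disjoint_Ico_consecutive 0 (q * y) (q * y + q))),
      ← Finset.range_eq_Ico]

lemma K1 (hq : 2 < q) (hodd : Odd q) (y : ℕ) :
    (q - 1) * ((Finset.range y).filter (fun m => ¬ Even (c q m))).card ≤ 2 * Nev q (q * y) := by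
  classical
  obtain ⟨w, hw⟩ := hodd
  set O : Finset ℕ := (Finset.range y).filter (fun m => ¬ Even (c q m)) with hO
  have h1 : Nev q (q * y)
      = ∑ m ∈ Finset.range y, ((Finset.Ico (q * m) (q * m + q)).filter (fun j => Even (c q j))).card :=
    block_sum hq _ y
  have h2 : ∑ m ∈ O, (q - 1) / 2
      ≤ ∑ m ∈ O, ((Finset.Ico (q * m) (q * m + q)).filter (fun j => Even (c q j))).card := by
    apply Finset.sum_le_sum
    intro m hm
    rw [hO, Finset.mem_filter] at hm
    exact block_evens hq ⟨w, hw⟩ hm.2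
  have h3 : ∑ m ∈ O, ((Finset.Ico (q * m) (q * m + q)).filter (fun j => Even (c q j))).card
      ≤ ∑ m ∈ Finset.range y, ((Finset.Ico (q * m) (q * m + q)).filter (fun j => Even (c q j))).card :=
    Finset.sum_le_sum_of_subset (Finset.filter_subset _ _)
  have h4 : ∑ m ∈ O, (q - 1) / 2 = O.card * ((q - 1) / 2) := by
    rw [Finset.sum_const, smul_eq_mul]
  have h5 : O.card * ((q - 1) / 2) ≤ Nev q (q * y) := by
    rw [h1]
    calc O.card * ((q - 1) / 2) = ∑ m ∈ O, (q - 1) / 2 := h4.symm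
      _ ≤ _ := le_trans h2 h3
  have hw2 : (q - 1) / 2 = w := by omega
  have hq1 : q - 1 = 2 * w := by omega
  calc (q - 1) * O.card = 2 * (O.card * w) := by rw [hq1]; ring
    _ = 2 * (O.card * ((q - 1) / 2)) := by rw [hw2]
    _ ≤ 2 * Nev q (q * y) := Nat.mul_le_mul_left 2 h5

lemma K3 (hq : 2 < q) (hodd : Odd q) (y : ℕ) :
    (q - 1) * y ≤ (q + 1) * Nev q (q * y) := by
  classical
  set O : Finset ℕ := (Finset.range y).filter (fun m => ¬ Even (c q m)) with hO
  have hNO : Nev q y + O.card = y := by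
    rw [Nev, hO]
    rw [Finset.card_filter_add_card_filter_not]
    exact Finset.card_range y
  have k1 := K1 hq hodd y
  have k2 : Nev q y ≤ Nev q (q * y) := Nev_mono (Nat.le_mul_of_pos_left y (by omega))
  have e1 : (q - 1) * y = (q - 1) * Nev q y + (q - 1) * O.card := by
    conv_lhs => rw [← hNO]
    rw [Nat.mul_add]
  calc (q - 1) * y = (q - 1) * Nev q y + (q - 1) * O.card := e1
    _ ≤ (q - 1) * Nev q (q * y) + 2 * Nev q (q * y) :=
        Nat.add_le_add (Nat.mul_le_mul_left _ k2) k1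
    _ = (q - 1 + 2) * Nev q (q * y) := (Nat.add_mul _ _ _).symm
    _ = (q + 1) * Nev q (q * y) := by rw [show q - 1 + 2 = q + 1 from by omega]

/-! ### Lower bound for the count of even values of `fpq` -/

lemma count_lower (hq : 2 < q) (hodd : Odd q) (x : ℕ) :
    q * Nev q (x / q) ≤ ((Finset.Icc 1 x).filter (fun n => Even (fpq 2 q n))).card + q := by
  classical
  set B : Finset ℕ := (Finset.Ico 1 (x / q)).filter (fun m => Even (c q m)) with hB
  set T : Finset ℕ := B.biUnion (fun m => Finset.Ico (q * m) (q * m + q)) with hT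
  have hbd : ∀ m m' : ℕ, m < m' →
      Disjoint (Finset.Ico (q * m) (q * m + q)) (Finset.Ico (q * m') (q * m' + q)) := by
    intro m m' h
    have h1 : q * m + q ≤ q * m' := by
      calc q * m + q = q * (m + 1) := (Nat.mul_succ q m).symm
        _ ≤ q * m' := Nat.mul_le_mul_left q h
    exact (Finset.Ico_disjoint_Ico_consecutive (q * m) (q * m + q) (q * m' + q)).mono_right
      (Finset.Ico_subset_Ico h1 le_rfl)
  have hcardT : T.card = q * B.card := by
    rw [hT, Finset.card_biUnion (fun m _ m' _ hne => by
      rcases hne.lt_or_gt with h | h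
      · exact hbd m m' h
      · exact (hbd m' m h).symm)]
    have hcards : ∀ m ∈ B, (Finset.Ico (q * m) (q * m + q)).card = q := by
      intro m _
      rw [Nat.card_Ico, Nat.add_sub_cancel_left]
    rw [Finset.sum_congr rfl hcards, Finset.sum_const, smul_eq_mul, mul_comm]
  have hTsub : T ⊆ (Finset.Icc 1 x).filter (fun n => Even (fpq 2 q n)) := by
    intro j hj
    rw [hT, Finset.mem_biUnion] at hj
    obtain ⟨m, hm, hjm⟩ := hj
    rw [hB, Finset.mem_filter, Finset.mem_Ico] at hm
    obtain ⟨⟨hm1, hm2⟩, hmev⟩ := hm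
    rw [Finset.mem_Ico] at hjm
    have hle1 : q * 1 ≤ q * m := Nat.mul_le_mul_left q hm1
    have hle2 : q * (m + 1) ≤ q * (x / q) := Nat.mul_le_mul_left q hm2
    have hle3 : q * (x / q) ≤ x := Nat.mul_div_le x q
    have hqm : q * (m + 1) = q * m + q := by ring
    rw [Finset.mem_filter, Finset.mem_Icc]
    refine ⟨⟨by omega, by omega⟩, ?_⟩
    have hr : j = q * m + (j - q * m) := by omega
    have hrlt : j - q * m < q := by omega
    rw [hr, fpq_block hq hrlt]
    exact hmev
  have hNB : Nev q (x / q) ≤ B.card + 1 := by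
    have hsub : (Finset.range (x / q)).filter (fun m => Even (c q m)) ⊆ insert 0 B := by
      intro m hm
      rw [Finset.mem_filter, Finset.mem_range] at hm
      rcases Nat.eq_zero_or_pos m with rfl | hpos
      · exact Finset.mem_insert_self 0 B
      · apply Finset.mem_insert_of_mem
        rw [hB, Finset.mem_filter, Finset.mem_Ico]
        exact ⟨⟨hpos, hm.1⟩, hm.2⟩
    calc Nev q (x / q) ≤ (insert 0 B).card := Finset.card_le_card hsub
      _ ≤ B.card + 1 := Finset.card_insert_le 0 B
  calc q * Nev q (x / q) ≤ q * (B.card + 1) := Nat.mul_le_mul_left q hNB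
    _ = q * B.card + q := by ring
    _ = T.card + q := by rw [hcardT]
    _ ≤ ((Finset.Icc 1 x).filter (fun n => Even (fpq 2 q n))).card + q :=
        Nat.add_le_add_right (Finset.card_le_card hTsub) q

end Stmt11Aux


set_option maxHeartbeats 1000000 in
theorem stmt11 (q : ℕ) (hq : 2 < q) (hodd : Odd q) :
    (1 / (2 * q) - 1 / (2 * q ^ 2) : ℝ) ≤
      Filter.atTop.liminf (fun x : ℕ =>
        (((Finset.Icc 1 x).filter (fun n => Even (fpq 2 q n))).card : ℝ) / x) := by
  classical
  have hqR : (3 : ℝ) ≤ (q : ℝ) := by exact_mod_cast hq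
  have hq0 : (0 : ℝ) < q := by linarith
  have key : ∀ᶠ x : ℕ in atTop,
      (1 / (2 * q) - 1 / (2 * q ^ 2) : ℝ) ≤
        (((Finset.Icc 1 x).filter (fun n => Even (fpq 2 q n))).card : ℝ) / x := by
    rw [Filter.eventually_atTop]
    refine ⟨4 * q ^ 4, fun x hx => ?_⟩
    have hq4 : 0 < 4 * q ^ 4 := by positivity
    have hxpos : 0 < x := by omega
    set cnt : ℕ := ((Finset.Icc 1 x).filter (fun n => Even (fpq 2 q n))).card with hcnt
    set z : ℕ := x / (q * q) with hz
    have hzz : x / q / q = z := by rw [hz, Nat.div_div_eq_div_mul]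
    have hA : q * Stmt11Aux.Nev q (x / q) ≤ cnt + q := Stmt11Aux.count_lower hq hodd x
    have hB : (q - 1) * z ≤ (q + 1) * Stmt11Aux.Nev q (x / q) := by
      have h1 := Stmt11Aux.K3 hq hodd z
      have h2 : Stmt11Aux.Nev q (q * z) ≤ Stmt11Aux.Nev q (x / q) := by
        apply Stmt11Aux.Nev_mono
        rw [← hzz]
        exact Nat.mul_div_le (x / q) q
      calc (q - 1) * z ≤ (q + 1) * Stmt11Aux.Nev q (q * z) := h1
        _ ≤ (q + 1) * Stmt11Aux.Nev q (x / q) := Nat.mul_le_mul_left _ h2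
    have hxz : x < q * q * z + q * q := by
      have h1 := Nat.div_add_mod x (q * q)
      have h2 : x % (q * q) < q * q := Nat.mod_lt _ (by positivity)
      rw [← hz] at h1
      omega
    have hzx : 4 * q ^ 2 ≤ z := by
      rw [hz, Nat.le_div_iff_mul_le (by positivity : 0 < q * q)]
      calc 4 * q ^ 2 * (q * q) = 4 * q ^ 4 := by ring
        _ ≤ x := hx
    -- cast everything to ℝ
    obtain ⟨NR, hNR⟩ : ∃ NR : ℝ, (Stmt11Aux.Nev q (x / q) : ℝ) = NR := ⟨_, rfl⟩
    obtain ⟨CR, hCR⟩ : ∃ CR : ℝ, (cnt : ℝ) = CR := ⟨_, rfl⟩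
    obtain ⟨ZR, hZR⟩ : ∃ ZR : ℝ, (z : ℝ) = ZR := ⟨_, rfl⟩
    obtain ⟨XR, hXR⟩ : ∃ XR : ℝ, (x : ℝ) = XR := ⟨_, rfl⟩
    have hAR : (q : ℝ) * NR ≤ CR + q := by
      rw [← hNR, ← hCR]; exact_mod_cast hA
    have hBR : ((q : ℝ) - 1) * ZR ≤ ((q : ℝ) + 1) * NR := by
      rw [← hNR, ← hZR]
      have hcast : ((q - 1 : ℕ) : ℝ) * (z : ℝ) ≤ ((q + 1 : ℕ) : ℝ) * (Stmt11Aux.Nev q (x / q) : ℝ) := by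
        exact_mod_cast hB
      rw [Nat.cast_sub (by omega : 1 ≤ q)] at hcast
      push_cast at hcast
      exact hcast
    have hxzR : XR < (q : ℝ) * q * ZR + q * q := by
      rw [← hXR, ← hZR]; exact_mod_cast hxz
    have hzxR : 4 * (q : ℝ) ^ 2 ≤ ZR := by
      rw [← hZR]; exact_mod_cast hzx
    have hXR0 : (0 : ℝ) < XR := by rw [← hXR]; exact_mod_cast hxpos
    -- assemble
    have s1 : 2 * (q : ℝ) ^ 3 * (((q : ℝ) - 1) * ZR) ≤ 2 * (q : ℝ) ^ 3 * (((q : ℝ) + 1) * NR) :=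
      mul_le_mul_of_nonneg_left hBR (by positivity)
    have s2 : 2 * (q : ℝ) ^ 2 * ((q : ℝ) + 1) * ((q : ℝ) * NR)
        ≤ 2 * (q : ℝ) ^ 2 * ((q : ℝ) + 1) * (CR + q) :=
      mul_le_mul_of_nonneg_left hAR (by positivity)
    have hqq1 : (0 : ℝ) ≤ ((q : ℝ) - 1) * ((q : ℝ) + 1) := by nlinarith
    have s3 : ((q : ℝ) - 1) * ((q : ℝ) + 1) * XR
        ≤ ((q : ℝ) - 1) * ((q : ℝ) + 1) * ((q : ℝ) * q * ZR + q * q) :=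
      mul_le_mul_of_nonneg_left hxzR.le hqq1
    have s4 : 4 * (q : ℝ) ^ 2 * ((q : ℝ) ^ 2 * ((q : ℝ) - 1) ^ 2)
        ≤ ZR * ((q : ℝ) ^ 2 * ((q : ℝ) - 1) ^ 2) :=
      mul_le_mul_of_nonneg_right hzxR (by positivity)
    have p2 : 3 * (q : ℝ) ≤ (q : ℝ) ^ 2 := by nlinarith
    have p3 : 3 * (q : ℝ) ^ 2 ≤ (q : ℝ) ^ 3 := by nlinarith
    have p4 : 3 * (q : ℝ) ^ 3 ≤ (q : ℝ) ^ 4 := by nlinarith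
    have p5 : 3 * (q : ℝ) ^ 4 ≤ (q : ℝ) ^ 5 := by nlinarith
    have p6 : 3 * (q : ℝ) ^ 5 ≤ (q : ℝ) ^ 6 := by nlinarith
    have qf : ((q : ℝ) ^ 2 - 1) * q ^ 2 + 2 * q ^ 3 * ((q : ℝ) + 1)
        ≤ 4 * (q : ℝ) ^ 2 * ((q : ℝ) ^ 2 * ((q : ℝ) - 1) ^ 2) := by nlinarith [p3, p4, p5, p6]
    have G : ((q : ℝ) ^ 2 - 1) * XR ≤ 2 * (q : ℝ) ^ 2 * ((q : ℝ) + 1) * CR := by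
      linarith [s1, s2, s3, s4, qf]
    have hgoal : ((q : ℝ) - 1) * XR ≤ 2 * (q : ℝ) ^ 2 * CR := by
      have hq1 : (0 : ℝ) < (q : ℝ) + 1 := by linarith
      apply le_of_mul_le_mul_right _ hq1
      calc ((q : ℝ) - 1) * XR * ((q : ℝ) + 1) = ((q : ℝ) ^ 2 - 1) * XR := by ring
        _ ≤ 2 * (q : ℝ) ^ 2 * ((q : ℝ) + 1) * CR := G
        _ = 2 * (q : ℝ) ^ 2 * CR * ((q : ℝ) + 1) := by ring
    rw [le_div_iff₀ (by exact_mod_cast hxpos : (0 : ℝ) < (x : ℝ)), hCR, hXR]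
    have expand : (1 / (2 * (q : ℝ)) - 1 / (2 * q ^ 2)) * XR = (((q : ℝ) - 1) * XR) / (2 * q ^ 2) := by
      field_simp
    rw [expand, div_le_iff₀ (by positivity : (0 : ℝ) < 2 * (q : ℝ) ^ 2)]
    linarith [hgoal]
  have hcb : Filter.IsCoboundedUnder (· ≥ ·) Filter.atTop
      (fun x : ℕ => (((Finset.Icc 1 x).filter (fun n => Even (fpq 2 q n))).card : ℝ) / x) := by
    apply Filter.isCoboundedUnder_ge_of_le Filter.atTop (x := 1)
    intro x
    rcases Nat.eq_zero_or_pos x with rfl | hx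
    · simp
    · have h1 : ((Finset.Icc 1 x).filter (fun n => Even (fpq 2 q n))).card ≤ x := by
        calc ((Finset.Icc 1 x).filter (fun n => Even (fpq 2 q n))).card
            ≤ (Finset.Icc 1 x).card := Finset.card_filter_le _ _
          _ = x := by rw [Nat.card_Icc]; omega
      rw [div_le_one (by exact_mod_cast hx)]
      exact_mod_cast h1
  exact Filter.le_liminf_of_le hcb key
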